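/- If X, Y are scattered topological spaces and f : X → Y is a d-map (continuous, open, pointwise discrete), then f is rank-preserving: for every x ∈ X, ρ_X(x) = ρ_Y(f(x)), where ρ denotes Cantor-Bendixson rank. -/

import Mathlib

/-- Derived set (set of limit points) of `A`. -/
def derivSet {X : Type*} [TopologicalSpace X] (A : Set X) : Set X :=
  {x | ∀ U : Set X, IsOpen U → x ∈ U → ∃ y, y ∈ U ∩ A ∧ y ≠ x}

/-- Iterated Cantor-Bendixson derivative `d^o A`. -/
noncomputable def CBd {X : Type*} [TopologicalSpace X] (A : Set X) (o : Ordinal) : Set X :=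
  Ordinal.limitRecOn o A (fun _ ih => derivSet ih)
    (fun o _ ih => ⋂ b : Set.Iio o, ih b.1 b.2)

/-- Cantor-Bendixson rank of a point: least α with x ∉ d^{α+1} X. -/
noncomputable def rank {X : Type*} [TopologicalSpace X] (x : X) : Ordinal :=
  sInf {α : Ordinal | x ∉ CBd (Set.univ : Set X) (α + 1)}

/-- A space is scattered if every nonempty subset has an isolated point. -/
def Scattered (X : Type*) [TopologicalSpace X] : Prop :=
  ∀ A : Set X, A.Nonempty → ∃ x ∈ A, ∃ U : Set X, IsOpen U ∧ U ∩ A = {x}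

/-- A map is pointwise discrete if each of its point-fibers is a discrete subspace. -/
def PointwiseDiscrete {X Y : Type*} [TopologicalSpace X] (f : X → Y) : Prop :=
  ∀ y : Y, DiscreteTopology (f ⁻¹' {y})

theorem CBd_zero {X : Type*} [TopologicalSpace X] (A : Set X) : CBd A 0 = A :=
  Ordinal.limitRecOn_zero ..

theorem CBd_succ {X : Type*} [TopologicalSpace X] (A : Set X) (o : Ordinal) :
    CBd A (o + 1) = derivSet (CBd A o) := by
  have : o + 1 = Order.succ o := rfl
  rw [CBd, this, Ordinal.limitRecOn_succ]; rfl

theorem CBd_limit {X : Type*} [TopologicalSpace X] (A : Set X) (o : Ordinal)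
    (h : Order.IsSuccLimit o) : CBd A o = ⋂ b : Set.Iio o, CBd A b.1 := by
  rw [CBd, Ordinal.limitRecOn_limit _ _ _ _ h]
  rfl

/-- Key lemma: for a d-map, preimage commutes with derived set. -/
theorem derivSet_preimage {X Y : Type*} [TopologicalSpace X] [TopologicalSpace Y]
    (f : X → Y) (hc : Continuous f) (ho : IsOpenMap f) (hpd : PointwiseDiscrete f)
    (A : Set Y) : derivSet (f ⁻¹' A) = f ⁻¹' derivSet A := by
  ext x
  constructor
  · intro hx U hU hfxU
    -- x is isolated in its fiber: get open V with V ∩ fiber = {x}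
    have hd := hpd (f x)
    have hx_mem : x ∈ f ⁻¹' {f x} := rfl
    have hsing : IsOpen ({(⟨x, hx_mem⟩ : f ⁻¹' {f x})} : Set (f ⁻¹' {f x})) :=
      isOpen_discrete _
    rw [isOpen_induced_iff] at hsing
    obtain ⟨V, hVopen, hV⟩ := hsing
    have hVfib : V ∩ f ⁻¹' {f x} = {x} := by
      apply Set.Subset.antisymm
      · rintro z ⟨hzV, hzfib⟩
        have : (⟨z, hzfib⟩ : f ⁻¹' {f x}) ∈ (Subtype.val ⁻¹' V :
            Set (f ⁻¹' {f x})) := hzV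
        rw [hV] at this
        simpa using congrArg Subtype.val (Set.mem_singleton_iff.mp this)
      · intro z hz
        cases Set.mem_singleton_iff.mp hz
        have : (⟨x, hx_mem⟩ : f ⁻¹' {f x}) ∈ (Subtype.val ⁻¹' V :
            Set (f ⁻¹' {f x})) := by rw [hV]; rfl
        exact ⟨this, rfl⟩
    have hxV : x ∈ V := by
      have : x ∈ V ∩ f ⁻¹' {f x} := hVfib ▸ rfl
      exact this.1
    obtain ⟨z, ⟨⟨hz1, hz2⟩, hz3⟩, hz4⟩ := hx (f ⁻¹' U ∩ V) ((hU.preimage hc).inter hVopen)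
      ⟨hfxU, hxV⟩
    refine ⟨f z, ⟨hz1, hz3⟩, fun hEq => hz4 ?_⟩
    have : z ∈ V ∩ f ⁻¹' {f x} := ⟨hz2, hEq⟩
    rw [hVfib] at this
    exact this
  · intro hfx U hU hxU
    obtain ⟨y, ⟨hyU, hyA⟩, hyne⟩ := hfx (f '' U) (ho U hU) ⟨x, hxU, rfl⟩
    obtain ⟨z, hzU, rfl⟩ := hyU
    exact ⟨z, ⟨hzU, hyA⟩, fun h => hyne (by rw [h])⟩

theorem CBd_univ_preimage {X Y : Type*} [TopologicalSpace X] [TopologicalSpace Y]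
    (f : X → Y) (hc : Continuous f) (ho : IsOpenMap f) (hpd : PointwiseDiscrete f)
    (o : Ordinal) : CBd (Set.univ : Set X) o = f ⁻¹' CBd (Set.univ : Set Y) o := by
  induction o using Ordinal.limitRecOn with
  | zero => simp [CBd_zero]
  | add_one o ih =>
      have : Order.succ o = o + 1 := rfl
      rw [CBd_succ, CBd_succ, ih, derivSet_preimage f hc ho hpd]
  | limit o hlim ih =>
      rw [CBd_limit _ _ hlim, CBd_limit _ _ hlim]
      rw [Set.preimage_iInter]
      exact Set.iInter_congr fun b => ih b.1 b.2

/-- d-maps between scattered spaces preserve Cantor-Bendixson rank. -/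
theorem dmap_rank_preserving {X Y : Type*} [TopologicalSpace X] [TopologicalSpace Y]
    (hX : Scattered X) (hY : Scattered Y) (f : X → Y)
    (hc : Continuous f) (ho : IsOpenMap f) (hpd : PointwiseDiscrete f) :
    ∀ x : X, rank (f x) = rank x := by
  intro x
  unfold rank
  congr 1
  ext α
  simp only [Set.mem_setOf_eq]
  rw [CBd_univ_preimage f hc ho hpd (α + 1)]
  rfl
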